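/- Let q be a prime power, g a primitive element of F_{q^2}, and Q: F_{q^2}^{2ℓ} → F_{q^2} a nonsingular elliptic quadratic form. For 0 ≤ i ≤ q, let Ω_{g^i} = {x ≠ 0 : tr_{q^2/q}(g^i Q(x)) = 0}, and let Ω₀ = {x ≠ 0 : Q(x) = 0}. Then Ω₀ ⊆ Ω_{g^i} for every i, and the q+2 sets Ω₀ and Ω_{g^i} ∖ Ω₀ (0 ≤ i ≤ q) partition F_{q^2}^{2ℓ} ∖ {0}. -/

import Mathlib

/-- The `k`-th entry of a vector, or `0` if `k` is out of range. -/
def ent {F : Type} [Zero F] {n : ℕ} (v : Fin n → F) (k : ℕ) : F :=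
  if h : k < n then v ⟨k, h⟩ else 0

/-- `Q` is a nonsingular elliptic (minus-type) quadratic form on `F^{2ℓ}`. -/
def IsEllipticForm {F : Type} [Field F] (ℓ : ℕ) (Q : (Fin (2 * ℓ) → F) → F) : Prop :=
  ∃ (a b c : F) (e : (Fin (2 * ℓ) → F) ≃ₗ[F] (Fin (2 * ℓ) → F)),
    (∀ x y : F, a * x ^ 2 + b * x * y + c * y ^ 2 = 0 → x = 0 ∧ y = 0) ∧
    ∀ v, Q v = a * ent (e v) 0 ^ 2 + b * ent (e v) 0 * ent (e v) 1 + c * ent (e v) 1 ^ 2 +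
        ∑ i ∈ Finset.range ℓ, if 1 ≤ i then ent (e v) (2 * i) * ent (e v) (2 * i + 1) else 0

section Aux

variable {F : Type} [Field F] [Fintype F]

lemma prim_ne_zero (q : ℕ) (hq2 : 2 ≤ q)
  (hF : Fintype.card F = q ^ 2) (g : F) (hg : ∀ x : F, x ≠ 0 → ∃ k : ℕ, g ^ k = x) : g ≠ 0 := by
  classical
  have hcard : 1 < Fintype.card Fˣ := by
    rw [Fintype.card_units, hF]
    have h4 : 4 ≤ q ^ 2 := by nlinarith
    omega
  obtain ⟨u, hu⟩ := Fintype.exists_ne_of_one_lt_card hcard 1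
  obtain ⟨k, hk⟩ := hg (u : F) (Units.ne_zero u)
  intro h0
  subst h0
  rcases Nat.eq_zero_or_pos k with rfl | hk0
  · simp at hk
    exact hu (Units.ext hk.symm)
  · rw [zero_pow (by omega)] at hk
    exact Units.ne_zero u hk.symm

lemma prim_pow_eq_pow (q : ℕ) (hq2 : 2 ≤ q)
  (hF : Fintype.card F = q ^ 2) (g : F) (hg : ∀ x : F, x ≠ 0 → ∃ k : ℕ, g ^ k = x) (a b : ℕ) : g ^ a = g ^ b ↔ a ≡ b [MOD q ^ 2 - 1] := by
  classical
  have hg0 : g ≠ 0 := prim_ne_zero q hq2 hF g hg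
  set gu : Fˣ := Units.mk0 g hg0 with hgu
  have hord : orderOf gu = q ^ 2 - 1 := by
    rw [orderOf_eq_card_of_forall_mem_zpowers, Nat.card_eq_fintype_card,
      Fintype.card_units, hF]
    intro x
    obtain ⟨k, hk⟩ := hg (x : F) (Units.ne_zero x)
    rw [Subgroup.mem_zpowers_iff]
    exact ⟨(k : ℤ), by rw [zpow_natCast]; exact Units.ext (by simpa [hgu] using hk)⟩
  have : g ^ a = g ^ b ↔ gu ^ a = gu ^ b := by
    constructor
    · intro h; exact Units.ext (by simpa [hgu] using h)
    · intro h; simpa [hgu] using congrArg Units.val h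
  rw [this, pow_eq_pow_iff_modEq, hord]

lemma trace_aux_uniq (q : ℕ) (hq2 : 2 ≤ q)
  (hF : Fintype.card F = q ^ 2) (g : F) (hg : ∀ x : F, x ≠ 0 → ∃ k : ℕ, g ^ k = x) (β : F) (hβ : β ≠ 0) (i j : ℕ) (hi : i ≤ q) (hj : j ≤ q)
    (h1 : g ^ i * β + (g ^ i * β) ^ q = 0) (h2 : g ^ j * β + (g ^ j * β) ^ q = 0) :
    i = j := by
  obtain ⟨m, rfl⟩ := hg β hβ
  rw [← pow_add, ← pow_mul] at h1 h2
  have h1' : g ^ ((i + m) * q) = -g ^ (i + m) := by linear_combination h1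
  have h2' : g ^ ((j + m) * q) = -g ^ (j + m) := by linear_combination h2
  have key : g ^ ((i + m) * q + (j + m)) = g ^ ((j + m) * q + (i + m)) := by
    rw [pow_add g ((i + m) * q) (j + m), pow_add g ((j + m) * q) (i + m), h1', h2']; ring
  rw [prim_pow_eq_pow q hq2 hF g hg] at key
  have hdvd : ((q ^ 2 - 1 : ℕ) : ℤ) ∣ ((j + m) * q + (i + m) : ℕ) - ((i + m) * q + (j + m) : ℕ) :=
    key.dvd
  have hcast : (((q ^ 2 - 1 : ℕ)) : ℤ) = ((q : ℤ) + 1) * ((q : ℤ) - 1) := by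
    have h4 : 1 ≤ q ^ 2 := by nlinarith
    rw [Nat.cast_sub h4]
    push_cast
    ring
  have hdvd2 : ((q : ℤ) + 1) * ((q : ℤ) - 1) ∣ ((i : ℤ) - j) * ((q : ℤ) - 1) := by
    rw [← hcast]
    convert hdvd.neg_right using 1
    · rfl
    push_cast
    ring
  have hq1 : ((q : ℤ) - 1) ≠ 0 := by
    have h2 : (2 : ℤ) ≤ (q : ℤ) := by exact_mod_cast hq2
    omega
  have hdvd3 : ((q : ℤ) + 1) ∣ ((i : ℤ) - j) := by
    rcases hdvd2 with ⟨c, hc⟩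
    refine ⟨c, ?_⟩
    have := mul_right_cancel₀ hq1 (by linarith [hc] : ((i : ℤ) - j) * ((q : ℤ) - 1) = (((q : ℤ) + 1) * c) * ((q : ℤ) - 1))
    exact this
  have habs : |(i : ℤ) - j| < (q : ℤ) + 1 := by
    have hi' : (i : ℤ) ≤ q := by exact_mod_cast hi
    have hj' : (j : ℤ) ≤ q := by exact_mod_cast hj
    have : (0 : ℤ) ≤ i := Int.natCast_nonneg i
    have : (0 : ℤ) ≤ j := Int.natCast_nonneg j
    rw [abs_lt]; omega
  have := Int.eq_zero_of_abs_lt_dvd hdvd3 habs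
  omega

lemma trace_aux_exist (q : ℕ) (hq2 : 2 ≤ q)
  (hF : Fintype.card F = q ^ 2) (g : F) (hg : ∀ x : F, x ≠ 0 → ∃ k : ℕ, g ^ k = x) (β : F) (hβ : β ≠ 0) :
    ∃ i : ℕ, i ≤ q ∧ g ^ i * β + (g ^ i * β) ^ q = 0 := by
  obtain ⟨m, rfl⟩ := hg β hβ
  have hn1 : (-1 : F) ≠ 0 := by simp
  obtain ⟨k, hk⟩ := hg (-1) hn1
  have hpow1 : (-1 : F) ^ (q + 1) = 1 := by
    rcases Nat.even_or_odd q with he | ho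
    · have hodd : Odd (q ^ 2 - 1) := by
        rcases he with ⟨r, hr⟩
        have hr1 : 1 ≤ r := by omega
        have hsq : q ^ 2 = 4 * (r * r) := by subst hr; ring
        have hrr : 1 ≤ r * r := Nat.one_le_iff_ne_zero.mpr (by positivity)
        exact ⟨2 * (r * r) - 1, by omega⟩
      have h1 : (-1 : F) ^ (Fintype.card F - 1) = 1 :=
        FiniteField.pow_card_sub_one_eq_one (-1) hn1
      rw [hF, hodd.neg_one_pow] at h1
      rw [h1, one_pow]
    · exact Even.neg_one_pow (by rcases ho with ⟨r, hr⟩; exact ⟨r + 1, by omega⟩)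
  have hk1 : g ^ (k * (q + 1)) = g ^ 0 := by
    rw [pow_mul, hk, hpow1, pow_zero]
  rw [prim_pow_eq_pow q hq2 hF g hg] at hk1
  have hdvd : q ^ 2 - 1 ∣ k * (q + 1) := (Nat.modEq_zero_iff_dvd).mp hk1
  have hNeq : (q - 1) * (q + 1) = q ^ 2 - 1 := by
    rcases Nat.exists_eq_add_of_le (show 1 ≤ q by omega) with ⟨r, rfl⟩
    simp [Nat.add_sub_cancel]
    ring_nf
    omega
  have hdvd2 : (q - 1) ∣ k := by
    rw [← hNeq] at hdvd
    exact (Nat.mul_dvd_mul_iff_right (by omega : 0 < q + 1)).mp hdvd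
  obtain ⟨t, ht⟩ := hdvd2
  refine ⟨(t + (q + 1) * (m + 1) - m) % (q + 1), by
    have := Nat.mod_lt (t + (q + 1) * (m + 1) - m) (show 0 < q + 1 by omega); omega, ?_⟩
  set i := (t + (q + 1) * (m + 1) - m) % (q + 1) with hidef
  have hmle : m ≤ (q + 1) * (m + 1) := by
    calc m ≤ m + 1 := by omega
    _ ≤ (q + 1) * (m + 1) := Nat.le_mul_of_pos_left (m + 1) (by omega)
  have hmod : i + m ≡ t [MOD q + 1] := by
    have h1 : i ≡ t + (q + 1) * (m + 1) - m [MOD q + 1] := Nat.mod_modEq _ _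
    have h2 : i + m ≡ t + (q + 1) * (m + 1) - m + m [MOD q + 1] := h1.add_right m
    have h3 : t + (q + 1) * (m + 1) - m + m = t + (q + 1) * (m + 1) := by omega
    rw [h3] at h2
    calc i + m ≡ t + (q + 1) * (m + 1) [MOD q + 1] := h2
    _ ≡ t + 0 [MOD q + 1] := Nat.ModEq.add_left t (Nat.modEq_zero_iff_dvd.mpr ⟨m + 1, rfl⟩)
    _ = t := by omega
  have hmod2 : (i + m) * (q - 1) ≡ t * (q - 1) [MOD (q + 1) * (q - 1)] :=
    hmod.mul_right' (q - 1)
  have hNeq2 : (q + 1) * (q - 1) = q ^ 2 - 1 := by rw [mul_comm]; exact hNeq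
  rw [hNeq2] at hmod2
  have hgm : g ^ ((i + m) * (q - 1)) = -1 := by
    rw [← hk, prim_pow_eq_pow q hq2 hF g hg, ht, mul_comm (q - 1) t]
    exact hmod2
  have hsplit : (i + m) * q = (i + m) + (i + m) * (q - 1) := by
    rcases Nat.exists_eq_add_of_le (show 1 ≤ q by omega) with ⟨r, rfl⟩
    simp [Nat.add_sub_cancel]
    ring
  rw [← pow_add, ← pow_mul, hsplit, pow_add g (i + m) ((i + m) * (q - 1)), hgm]
  ring
end Aux

/-- let `F = F_{q²}`, `g` a primitive element of `F`, `Q` a nonsingular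
elliptic quadratic form on `F^{2ℓ}`, `Ω_{g^i} = {x ≠ 0 : tr_{q²/q}(gⁱ Q(x)) = 0}` for
`0 ≤ i ≤ q` (with `tr_{q²/q}(y) = y + y^q`) and `Ω₀ = {x ≠ 0 : Q(x) = 0}`.  Then
`Ω₀ ⊆ Ω_{g^i}` for every `i`, and the `q+2` sets `Ω₀`, `Ω_{g^i} ∖ Ω₀` (`0 ≤ i ≤ q`)
partition `F^{2ℓ} ∖ {0}`. -/


theorem rotated_quadrics_partition
    (p s q : ℕ) (hp : p.Prime) (hs : 1 ≤ s) (hq : q = p ^ s)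
    (F : Type) [Field F] [Fintype F] (hF : Fintype.card F = q ^ 2)
    (g : F) (hg : ∀ x : F, x ≠ 0 → ∃ k : ℕ, g ^ k = x)
    (ℓ : ℕ) (hℓ : 1 ≤ ℓ) (Q : (Fin (2 * ℓ) → F) → F) (hQ : IsEllipticForm ℓ Q) :
    let V := Fin (2 * ℓ) → F
    let Ω₀ : Set V := {x | x ≠ 0 ∧ Q x = 0}
    let Ωg : Fin (q + 1) → Set V :=
      fun i => {x | x ≠ 0 ∧ g ^ (i : ℕ) * Q x + (g ^ (i : ℕ) * Q x) ^ q = 0}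
    (∀ i : Fin (q + 1), Ω₀ ⊆ Ωg i) ∧
    (∀ i : Fin (q + 1), Disjoint Ω₀ (Ωg i \ Ω₀)) ∧
    (∀ i j : Fin (q + 1), i ≠ j → Disjoint (Ωg i \ Ω₀) (Ωg j \ Ω₀)) ∧
    (Ω₀ ∪ ⋃ i : Fin (q + 1), (Ωg i \ Ω₀)) = {x : V | x ≠ 0} := by
  intro V Ω₀ Ωg
  have hq2 : 2 ≤ q := by
    rw [hq]
    calc 2 ≤ p := hp.two_le
    _ ≤ p ^ s := Nat.le_self_pow (by omega) p
  refine ⟨?_, ?_, ?_, ?_⟩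
  · intro i x hx
    exact ⟨hx.1, by rw [hx.2]; simp [zero_pow (by omega : q ≠ 0)]⟩
  · intro i
    exact Set.disjoint_sdiff_right
  · intro i j hij
    rw [Set.disjoint_left]
    rintro x ⟨⟨hx0, hxi⟩, hxn⟩ ⟨⟨_, hxj⟩, _⟩
    have hQx : Q x ≠ 0 := fun h => hxn ⟨hx0, h⟩
    have := trace_aux_uniq q hq2 hF g hg (Q x) hQx i j
      (Nat.lt_succ_iff.mp i.isLt) (Nat.lt_succ_iff.mp j.isLt) hxi hxj
    exact hij (Fin.ext this)
  · ext x
    simp only [Set.mem_union, Set.mem_iUnion, Set.mem_setOf_eq, Set.mem_diff]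
    constructor
    · rintro (⟨h, _⟩ | ⟨i, ⟨h, _⟩, _⟩) <;> exact h
    · intro hx0
      by_cases hQx : Q x = 0
      · exact Or.inl ⟨hx0, hQx⟩
      · obtain ⟨i, hi, hcond⟩ := trace_aux_exist q hq2 hF g hg (Q x) hQx
        exact Or.inr ⟨⟨i, Nat.lt_succ_iff.mpr hi⟩, ⟨hx0, hcond⟩, fun h => hQx h.2⟩
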